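/- For every real stepsize h, every function Υ : ℝ → ℝ, every g : ℝ^d → ℝ^d and every (q,p) ∈ ℝ^d × ℝ^d, the composition Φ_{h/2,NL}(Φ_{h,L}(Φ_{h/2,NL}(q,p))) equals (q⁺,p⁺), where q⁺ = cos(hΩ)q + h·sinc(hΩ)p + (1/2)h²·sinc(hΩ)Υ(hΩ)g(q) and p⁺ = −hΩ²·sinc(hΩ)q + cos(hΩ)p + (1/2)h·(cos(hΩ)Υ(hΩ)g(q) + Υ(hΩ)g(q⁺)); that is, this Strang splitting is exactly the trigonometric integrator Φ̂_h with filter functions Φ = 1, Ψ = sinc·Υ, Ψ₀ = cos·Υ, Ψ₁ = Υ. -/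

import Mathlib

noncomputable section

/-- The (unnormalized) sinc function: `sinc x = sin x / x` for `x ≠ 0`, `sinc 0 = 1`. -/
def rsinc (x : ℝ) : ℝ := if x = 0 then 1 else Real.sin x / x

/-- Real coordinate space `ℝ^d` with the Euclidean norm. -/
abbrev Vec (d : ℕ) : Type := EuclideanSpace ℝ (Fin d)

/-- Block-diagonal scalar operator: multiplies the first `d₁` coordinates by `a`
and the remaining `d₂` coordinates by `b`.  This realizes `f(hΩ)` for
`Ω = diag(0·I_{d₁}, ω·I_{d₂})`, with `a = f 0` and `b = f (hω)`. -/
def bop (d₁ d₂ : ℕ) (a b : ℝ) (v : Vec (d₁ + d₂)) : Vec (d₁ + d₂) :=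
  WithLp.toLp 2 (fun i : Fin (d₁ + d₂) => (if (i : ℕ) < d₁ then a else b) * v i)

/-- One-stage explicit ERKN integrator `Φ_h` for `q'' + Ω²q = g(q)`:
`Q = cos(c₁hΩ)q + c₁h·sinc(c₁hΩ)p`,
`q⁺ = cos(hΩ)q + h·sinc(hΩ)p + h²·b̄₁(hΩ)g(Q)`,
`p⁺ = −hΩ²·sinc(hΩ)q + cos(hΩ)p + h·b₁(hΩ)g(Q)`. -/
def erkn (d₁ d₂ : ℕ) (h ω c₁ : ℝ) (bbar b₁ : ℝ → ℝ)
    (g : Vec (d₁ + d₂) → Vec (d₁ + d₂)) (x : Vec (d₁ + d₂) × Vec (d₁ + d₂)) :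
    Vec (d₁ + d₂) × Vec (d₁ + d₂) :=
  let q := x.1
  let p := x.2
  let Q := bop d₁ d₂ (Real.cos (c₁ * (h * 0))) (Real.cos (c₁ * (h * ω))) q
         + bop d₁ d₂ (c₁ * h * rsinc (c₁ * (h * 0))) (c₁ * h * rsinc (c₁ * (h * ω))) p
  ( bop d₁ d₂ (Real.cos (h * 0)) (Real.cos (h * ω)) q
    + bop d₁ d₂ (h * rsinc (h * 0)) (h * rsinc (h * ω)) p
    + bop d₁ d₂ (h ^ 2 * bbar (h * 0)) (h ^ 2 * bbar (h * ω)) (g Q),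
    bop d₁ d₂ (-(h * 0 ^ 2 * rsinc (h * 0))) (-(h * ω ^ 2 * rsinc (h * ω))) q
    + bop d₁ d₂ (Real.cos (h * 0)) (Real.cos (h * ω)) p
    + bop d₁ d₂ (h * b₁ (h * 0)) (h * b₁ (h * ω)) (g Q) )

/-- Exact time-`t` flow `Φ_{t,L}` of the linear equation `q̇ = p`, `ṗ = −Ω²q`. -/
def phiL (d₁ d₂ : ℕ) (ω t : ℝ) (x : Vec (d₁ + d₂) × Vec (d₁ + d₂)) :
    Vec (d₁ + d₂) × Vec (d₁ + d₂) :=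
  ( bop d₁ d₂ (Real.cos (t * 0)) (Real.cos (t * ω)) x.1
    + bop d₁ d₂ (t * rsinc (t * 0)) (t * rsinc (t * ω)) x.2,
    bop d₁ d₂ (-(t * 0 ^ 2 * rsinc (t * 0))) (-(t * ω ^ 2 * rsinc (t * ω))) x.1
    + bop d₁ d₂ (Real.cos (t * 0)) (Real.cos (t * ω)) x.2 )

/-- Time-`t` flow `Φ_{t,NL}` of the nonlinear equation `q̇ = 0`, `ṗ = Υ(hΩ)g(q)`. -/
def phiNL (d₁ d₂ : ℕ) (h ω : ℝ) (Υ : ℝ → ℝ) (g : Vec (d₁ + d₂) → Vec (d₁ + d₂))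
    (t : ℝ) (x : Vec (d₁ + d₂) × Vec (d₁ + d₂)) :
    Vec (d₁ + d₂) × Vec (d₁ + d₂) :=
  (x.1, x.2 + bop d₁ d₂ (t * Υ (h * 0)) (t * Υ (h * ω)) (g x.1))

/-- The trigonometric integrator `Φ̂_h` with filter functions `Φ = 1`, `Ψ = sinc·Υ`,
`Ψ₀ = cos·Υ`, `Ψ₁ = Υ`. -/
def trig (d₁ d₂ : ℕ) (ω : ℝ) (Υ : ℝ → ℝ) (g : Vec (d₁ + d₂) → Vec (d₁ + d₂))
    (h : ℝ) (x : Vec (d₁ + d₂) × Vec (d₁ + d₂)) :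
    Vec (d₁ + d₂) × Vec (d₁ + d₂) :=
  let q := x.1
  let p := x.2
  let qplus := bop d₁ d₂ (Real.cos (h * 0)) (Real.cos (h * ω)) q
      + bop d₁ d₂ (h * rsinc (h * 0)) (h * rsinc (h * ω)) p
      + bop d₁ d₂ ((1/2) * h ^ 2 * rsinc (h * 0) * Υ (h * 0))
          ((1/2) * h ^ 2 * rsinc (h * ω) * Υ (h * ω)) (g q)
  ( qplus,
    bop d₁ d₂ (-(h * 0 ^ 2 * rsinc (h * 0))) (-(h * ω ^ 2 * rsinc (h * ω))) q
    + bop d₁ d₂ (Real.cos (h * 0)) (Real.cos (h * ω)) p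
    + bop d₁ d₂ ((1/2) * h * Real.cos (h * 0) * Υ (h * 0))
        ((1/2) * h * Real.cos (h * ω) * Υ (h * ω)) (g q)
    + bop d₁ d₂ ((1/2) * h * Υ (h * 0)) ((1/2) * h * Υ (h * ω)) (g qplus) )

/-- The Strang splitting `Φ_{h/2,NL} ∘ Φ_{h,L} ∘ Φ_{h/2,NL}` is exactly
the trigonometric integrator with filters `Φ = 1`, `Ψ = sinc·Υ`, `Ψ₀ = cos·Υ`, `Ψ₁ = Υ`. -/
theorem strang_eq_trig (d₁ d₂ : ℕ) (ω : ℝ) (hω : 0 < ω) (h : ℝ) (Υ : ℝ → ℝ)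
    (g : Vec (d₁ + d₂) → Vec (d₁ + d₂)) (q p : Vec (d₁ + d₂)) :
    phiNL d₁ d₂ h ω Υ g (h/2) (phiL d₁ d₂ ω h (phiNL d₁ d₂ h ω Υ g (h/2) (q, p)))
      = trig d₁ d₂ ω Υ g h (q, p) := by
  simp only [phiNL, phiL, trig]
  have hq : bop d₁ d₂ (Real.cos (h*0)) (Real.cos (h*ω)) q
      + bop d₁ d₂ (h * rsinc (h*0)) (h * rsinc (h*ω))
          (p + bop d₁ d₂ (h/2 * Υ (h*0)) (h/2 * Υ (h*ω)) (g q))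
      = bop d₁ d₂ (Real.cos (h * 0)) (Real.cos (h * ω)) q
      + bop d₁ d₂ (h * rsinc (h * 0)) (h * rsinc (h * ω)) p
      + bop d₁ d₂ ((1/2) * h ^ 2 * rsinc (h * 0) * Υ (h * 0))
          ((1/2) * h ^ 2 * rsinc (h * ω) * Υ (h * ω)) (g q) := by
    ext i
    simp only [bop, PiLp.add_apply, PiLp.toLp_apply]
    split_ifs <;> ring
  rw [hq]
  refine Prod.ext rfl ?_
  ext i
  simp only [bop, PiLp.add_apply, PiLp.toLp_apply]
  split_ifs <;> ring
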